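/- Let 0 = x̃1 < x̃2 < x̃3 and ȳ1 < ȳ2 < ȳ3 be real numbers, and set m1 = (ȳ2−ȳ1)/x̃2 and m2 = (ȳ3−ȳ1)/x̃3. Assume m1 > m2. Define θ̃0 = ȳ1, θ̃1 = m1·m2·(x̃3−x̃2)/(m1−m2), θ̃2 = (ȳ3−ȳ2)/(m1−m2). Then θ̃1 > 0, θ̃2 > 0, and ȳᵢ = θ̃0 + θ̃1·x̃ᵢ/(x̃ᵢ+θ̃2) for i = 1, 2, 3. Moreover, (θ̃0, θ̃1, θ̃2) is the unique triple (θ0, θ1, θ2) with x̃ᵢ + θ2 ≠ 0 for i = 1, 2, 3 that satisfies these three interpolation equations; in particular, the weighted residual sum of squares vanishes at (θ̃0, θ̃1, θ̃2), so it is the maximum likelihood estimate. -/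

import Mathlib

/-- Analytic MLE for a three-point design in shifted coordinates `x̃1 = 0 < x̃2 < x̃3`,
for data with increasing concave shape: the stated parameters interpolate the data,
are admissible, are the unique interpolating triple, and make the weighted residual
sum of squares vanish. -/
theorem emax_MLE_shifted (x2 x3 y1 y2 y3 m1 m2 θ0' θ1' θ2' : ℝ)
    (hx2 : 0 < x2) (hx23 : x2 < x3)
    (hy12 : y1 < y2) (hy23 : y2 < y3)
    (hm1 : m1 = (y2 - y1) / x2) (hm2 : m2 = (y3 - y1) / x3)
    (hm : m1 > m2)
    (hθ0 : θ0' = y1)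
    (hθ1 : θ1' = m1 * m2 / (m1 - m2) * (x3 - x2))
    (hθ2 : θ2' = (y3 - y2) / (m1 - m2)) :
    0 < θ1' ∧ 0 < θ2' ∧
    (y1 = θ0' + θ1' * 0 / (0 + θ2') ∧
     y2 = θ0' + θ1' * x2 / (x2 + θ2') ∧
     y3 = θ0' + θ1' * x3 / (x3 + θ2')) ∧
    (∀ θ0 θ1 θ2 : ℝ, (0:ℝ) + θ2 ≠ 0 → x2 + θ2 ≠ 0 → x3 + θ2 ≠ 0 →
      y1 = θ0 + θ1 * 0 / (0 + θ2) →
      y2 = θ0 + θ1 * x2 / (x2 + θ2) →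
      y3 = θ0 + θ1 * x3 / (x3 + θ2) →
      θ0 = θ0' ∧ θ1 = θ1' ∧ θ2 = θ2') ∧
    (∀ n1 n2 n3 : ℝ,
      n1 * (y1 - (θ0' + θ1' * 0 / (0 + θ2')))^2 +
      n2 * (y2 - (θ0' + θ1' * x2 / (x2 + θ2')))^2 +
      n3 * (y3 - (θ0' + θ1' * x3 / (x3 + θ2')))^2 = 0) := by
  have hx2' : x2 ≠ 0 := ne_of_gt hx2
  have hx3 : (0:ℝ) < x3 := hx2.trans hx23
  have hx3' : x3 ≠ 0 := ne_of_gt hx3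
  have hx32 : (0:ℝ) < x3 - x2 := by linarith
  have hm2pos : 0 < m2 := by rw [hm2]; exact div_pos (by linarith) hx3
  have hm1pos : 0 < m1 := lt_trans hm2pos hm
  have hD : (0:ℝ) < m1 - m2 := by linarith
  have hD' : m1 - m2 ≠ 0 := ne_of_gt hD
  have h1 : m1 * x2 = y2 - y1 := by rw [hm1]; field_simp
  have h2 : m2 * x3 = y3 - y1 := by rw [hm2]; field_simp
  have hθ1pos : 0 < θ1' := by
    rw [hθ1]; exact mul_pos (div_pos (mul_pos hm1pos hm2pos) hD) hx32
  have hθ2pos : 0 < θ2' := by rw [hθ2]; exact div_pos (by linarith) hD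
  have he2 : x2 + θ2' = m2 * (x3 - x2) / (m1 - m2) := by
    rw [hθ2]; field_simp; linear_combination h1 - h2
  have he3 : x3 + θ2' = m1 * (x3 - x2) / (m1 - m2) := by
    rw [hθ2]; field_simp; linear_combination h1 - h2
  have he2' : x2 + θ2' ≠ 0 := by
    rw [he2]; positivity
  have he3' : x3 + θ2' ≠ 0 := by
    rw [he3]; positivity
  have hy2eq : y2 = θ0' + θ1' * x2 / (x2 + θ2') := by
    rw [hθ0, he2, hθ1]
    field_simp
    linear_combination (-1) * h1
  have hy3eq : y3 = θ0' + θ1' * x3 / (x3 + θ2') := by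
    rw [hθ0, he3, hθ1]
    field_simp
    linear_combination (-1) * h2
  refine ⟨hθ1pos, hθ2pos, ⟨by simp [hθ0], hy2eq, hy3eq⟩, ?_, ?_⟩
  · intro θ0 θ1 θ2 h0ne h2ne h3ne e1 e2 e3
    have hθ0v : θ0 = y1 := by simpa using e1.symm
    have A : (y2 - y1) * (x2 + θ2) = θ1 * x2 := by
      field_simp at e2
      linear_combination e2 + (x2 + θ2) * hθ0v
    have B : (y3 - y1) * (x3 + θ2) = θ1 * x3 := by
      field_simp at e3
      linear_combination e3 + (x3 + θ2) * hθ0v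
    have hk : θ2 * (m1 - m2) = y3 - y2 := by
      have key : x2 * x3 * (θ2 * (m1 - m2)) = x2 * x3 * (y3 - y2) := by
        linear_combination x3 * A - x2 * B + θ2 * x3 * h1 - θ2 * x2 * h2
      exact mul_left_cancel₀ (mul_ne_zero hx2' hx3') key
    have hθ2v : θ2 = θ2' := by
      rw [hθ2, eq_div_iff hD']; exact hk
    have hθ1v : θ1 = θ1' := by
      rw [hθ1, div_mul_eq_mul_div, eq_div_iff hD']
      have key2 : x2 * (θ1 * (m1 - m2)) = x2 * (m1 * m2 * (x3 - x2)) := by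
        linear_combination (-(m1 - m2)) * A + (m1 * x2 - (m1 - m2) * (x2 + θ2)) * h1
          - m1 * x2 * h2 + m1 * x2 * hk
      exact mul_left_cancel₀ hx2' key2
    exact ⟨hθ0v.trans hθ0.symm, hθ1v, hθ2v⟩
  · intro n1 n2 n3
    rw [← hy2eq, ← hy3eq]
    simp [hθ0]
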